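/- arXiv:1608.01864 — 6 statements merged into one kernel-verified Lean document; each statement's English description precedes it below -/
import Mathlib

section
/- Let h¹, h² be positive continuously differentiable real functions of the single variable y₁, and let u = (u₁,u₂) be a continuously differentiable vector field on an open subset of ℝ². Then at every point y = (y₁,y₂) one has div_{h²}(Ru) = (h¹/h²)·div_{h¹}u. In particular, if div_{h¹}u = 0 everywhere, then div_{h²}(Ru) = 0 everywhere. -/
/-- Partial derivative with respect to the first coordinate. -/
noncomputable def pd1 (f : ℝ × ℝ → ℝ) (y : ℝ × ℝ) : ℝ :=
  deriv (fun t => f (t, y.2)) y.1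

/-- Partial derivative with respect to the second coordinate. -/
noncomputable def pd2 (f : ℝ × ℝ → ℝ) (y : ℝ × ℝ) : ℝ :=
  deriv (fun t => f (y.1, t)) y.2

/-- Transformed divergence `div_h u` of the vector field `u = (u1, u2)`. -/
noncomputable def divh (h : ℝ → ℝ) (u1 u2 : ℝ × ℝ → ℝ) (y : ℝ × ℝ) : ℝ :=
  pd1 u1 y - y.2 / h y.1 * deriv h y.1 * pd2 u1 y + 1 / h y.1 * pd2 u2 y

/-- `div_{h²}(Ru) = (h¹/h²)·div_{h¹}u` pointwise, where
`Ru = ((h¹/h²)u₁, u₂ − y₂h²∂_{y₁}(h¹/h²)u₁)`; in particular if `div_{h¹}u = 0`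
everywhere then `div_{h²}(Ru) = 0` everywhere. -/
theorem divh_R_transform
    (h1 h2 : ℝ → ℝ) (u1 u2 : ℝ × ℝ → ℝ) (s : Set (ℝ × ℝ)) (hs : IsOpen s)
    (h1pos : ∀ x, 0 < h1 x) (h2pos : ∀ x, 0 < h2 x)
    (h1c : ContDiff ℝ 1 h1) (h2c : ContDiff ℝ 1 h2)
    (hu1 : ContDiffOn ℝ 1 u1 s) (hu2 : ContDiffOn ℝ 1 u2 s) :
    (∀ y ∈ s,
      divh h2 (fun z => h1 z.1 / h2 z.1 * u1 z)
        (fun z => u2 z - z.2 * h2 z.1 * deriv (fun x => h1 x / h2 x) z.1 * u1 z) y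
        = h1 y.1 / h2 y.1 * divh h1 u1 u2 y) ∧
    ((∀ y ∈ s, divh h1 u1 u2 y = 0) →
      ∀ y ∈ s,
        divh h2 (fun z => h1 z.1 / h2 z.1 * u1 z)
          (fun z => u2 z - z.2 * h2 z.1 * deriv (fun x => h1 x / h2 x) z.1 * u1 z) y = 0) := by

  have key : ∀ y ∈ s,
      divh h2 (fun z => h1 z.1 / h2 z.1 * u1 z)
        (fun z => u2 z - z.2 * h2 z.1 * deriv (fun x => h1 x / h2 x) z.1 * u1 z) y
        = h1 y.1 / h2 y.1 * divh h1 u1 u2 y := by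
    intro y hy
    have h1d := h1c.differentiable one_ne_zero
    have h2d := h2c.differentiable one_ne_zero
    have h1ne : h1 y.1 ≠ 0 := (h1pos y.1).ne'
    have h2ne : h2 y.1 ≠ 0 := (h2pos y.1).ne'
    have hu1y : DifferentiableAt ℝ u1 y :=
      (hu1.differentiableOn one_ne_zero).differentiableAt (hs.mem_nhds hy)
    have hu2y : DifferentiableAt ℝ u2 y :=
      (hu2.differentiableOn one_ne_zero).differentiableAt (hs.mem_nhds hy)
    have dA1 : DifferentiableAt ℝ (fun t => u1 (t, y.2)) y.1 :=
      hu1y.comp y.1 (differentiableAt_id.prodMk (differentiableAt_const _))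
    have dB1 : DifferentiableAt ℝ (fun t => u1 (y.1, t)) y.2 :=
      hu1y.comp y.2 ((differentiableAt_const _).prodMk differentiableAt_id)
    have dB2 : DifferentiableAt ℝ (fun t => u2 (y.1, t)) y.2 :=
      hu2y.comp y.2 ((differentiableAt_const _).prodMk differentiableAt_id)
    have A1 : HasDerivAt (fun t => u1 (t, y.2)) (pd1 u1 y) y.1 := dA1.hasDerivAt
    have B1 : HasDerivAt (fun t => u1 (y.1, t)) (pd2 u1 y) y.2 := dB1.hasDerivAt
    have B2 : HasDerivAt (fun t => u2 (y.1, t)) (pd2 u2 y) y.2 := dB2.hasDerivAt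
    have W : HasDerivAt (fun x => h1 x / h2 x)
        ((deriv h1 y.1 * h2 y.1 - h1 y.1 * deriv h2 y.1) / h2 y.1 ^ 2) y.1 :=
      ((h1d y.1).hasDerivAt).div ((h2d y.1).hasDerivAt) h2ne
    have Wdev : deriv (fun x => h1 x / h2 x) y.1
        = (deriv h1 y.1 * h2 y.1 - h1 y.1 * deriv h2 y.1) / h2 y.1 ^ 2 := W.deriv
    have P1 : HasDerivAt (fun t => h1 t / h2 t * u1 (t, y.2))
        ((deriv h1 y.1 * h2 y.1 - h1 y.1 * deriv h2 y.1) / h2 y.1 ^ 2 * u1 (y.1, y.2)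
          + h1 y.1 / h2 y.1 * pd1 u1 y) y.1 := W.mul A1
    have P2 : HasDerivAt (fun t => h1 y.1 / h2 y.1 * u1 (y.1, t))
        (h1 y.1 / h2 y.1 * pd2 u1 y) y.2 := B1.const_mul _
    have P3a : HasDerivAt (fun t => t * h2 y.1 * deriv (fun x => h1 x / h2 x) y.1)
        (1 * h2 y.1 * deriv (fun x => h1 x / h2 x) y.1) y.2 :=
      ((hasDerivAt_id y.2).mul_const _).mul_const _
    have P3 : HasDerivAt
        (fun t => u2 (y.1, t) - t * h2 y.1 * deriv (fun x => h1 x / h2 x) y.1 * u1 (y.1, t))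
        (pd2 u2 y - (1 * h2 y.1 * deriv (fun x => h1 x / h2 x) y.1 * u1 (y.1, y.2)
          + y.2 * h2 y.1 * deriv (fun x => h1 x / h2 x) y.1 * pd2 u1 y)) y.2 :=
      B2.sub (P3a.mul B1)
    simp only [divh, pd1, pd2]
    rw [P1.deriv, P2.deriv, P3.deriv, Wdev, A1.deriv, B1.deriv, B2.deriv]
    field_simp
    ring
  refine ⟨key, fun hz y hy => ?_⟩
  rw [key y hy, hz y hy, mul_zero]
end

section
/- Let h¹, h² be positive continuously differentiable real functions of the single variable y₁, and let u = (u₁,u₂) be a continuously differentiable vector field on an open subset of ℝ². Setting R⁻¹(y) := [[h²/h¹, 0], [−y₂·h¹·∂_{y₁}(h²/h¹), 1]], one has at every point y = (y₁,y₂): div_{h¹}(R⁻¹u) = (h²/h¹)·div_{h²}u. In particular, if div_{h²}u = 0 everywhere, then div_{h¹}(R⁻¹u) = 0 everywhere. -/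
/-- with `R⁻¹u = ((h²/h¹)u₁, u₂ − y₂h¹∂_{y₁}(h²/h¹)u₁)` one has
`div_{h¹}(R⁻¹u) = (h²/h¹)·div_{h²}u` pointwise; in particular if `div_{h²}u = 0`
everywhere then `div_{h¹}(R⁻¹u) = 0` everywhere. -/
theorem divh_Rinv_transform
    (h1 h2 : ℝ → ℝ) (u1 u2 : ℝ × ℝ → ℝ) (s : Set (ℝ × ℝ)) (hs : IsOpen s)
    (h1pos : ∀ x, 0 < h1 x) (h2pos : ∀ x, 0 < h2 x)
    (h1c : ContDiff ℝ 1 h1) (h2c : ContDiff ℝ 1 h2)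
    (hu1 : ContDiffOn ℝ 1 u1 s) (hu2 : ContDiffOn ℝ 1 u2 s) :
    (∀ y ∈ s,
      divh h1 (fun z => h2 z.1 / h1 z.1 * u1 z)
        (fun z => u2 z - z.2 * h1 z.1 * deriv (fun x => h2 x / h1 x) z.1 * u1 z) y
        = h2 y.1 / h1 y.1 * divh h2 u1 u2 y) ∧
    ((∀ y ∈ s, divh h2 u1 u2 y = 0) →
      ∀ y ∈ s,
        divh h1 (fun z => h2 z.1 / h1 z.1 * u1 z)
          (fun z => u2 z - z.2 * h1 z.1 * deriv (fun x => h2 x / h1 x) z.1 * u1 z) y = 0) := by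
  have hh1 : Differentiable ℝ h1 := h1c.differentiable one_ne_zero
  have hh2 : Differentiable ℝ h2 := h2c.differentiable one_ne_zero
  have hg : Differentiable ℝ (fun x => h2 x / h1 x) :=
    fun x => (hh2 x).div (hh1 x) (h1pos x).ne'
  have key : ∀ y ∈ s, divh h1 (fun z => h2 z.1 / h1 z.1 * u1 z)
      (fun z => u2 z - z.2 * h1 z.1 * deriv (fun x => h2 x / h1 x) z.1 * u1 z) y
      = h2 y.1 / h1 y.1 * divh h2 u1 u2 y := by
    rintro ⟨a, b⟩ hy
    have hU1 : DifferentiableAt ℝ u1 (a, b) :=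
      ((hu1.differentiableOn one_ne_zero) (a, b) hy).differentiableAt (hs.mem_nhds hy)
    have hU2 : DifferentiableAt ℝ u2 (a, b) :=
      ((hu2.differentiableOn one_ne_zero) (a, b) hy).differentiableAt (hs.mem_nhds hy)
    have hsl1 : DifferentiableAt ℝ (fun t => u1 (t, b)) a :=
      hU1.comp a (differentiableAt_id.prodMk (differentiableAt_const _))
    have hsl2 : DifferentiableAt ℝ (fun t => u1 (a, t)) b :=
      hU1.comp b ((differentiableAt_const _).prodMk differentiableAt_id)
    have hsl3 : DifferentiableAt ℝ (fun t => u2 (a, t)) b :=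
      hU2.comp b ((differentiableAt_const _).prodMk differentiableAt_id)
    set G := deriv (fun x => h2 x / h1 x) with hG
    have hrel : deriv h2 a = deriv h1 a * (h2 a / h1 a) + h1 a * G a := by
      conv_lhs => rw [show h2 = fun x => h1 x * (h2 x / h1 x) from
        funext fun x => by
          rw [mul_comm]; exact (div_mul_cancel₀ _ (h1pos x).ne').symm]
      rw [deriv_fun_mul (hh1 a) (hg a)]
    have A : pd1 (fun z => h2 z.1 / h1 z.1 * u1 z) (a, b)
        = G a * u1 (a, b) + h2 a / h1 a * pd1 u1 (a, b) := by
      show deriv (fun t => h2 t / h1 t * u1 (t, b)) a = _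
      rw [deriv_fun_mul (hg a) hsl1]
      rfl
    have B : pd2 (fun z => h2 z.1 / h1 z.1 * u1 z) (a, b)
        = h2 a / h1 a * pd2 u1 (a, b) := by
      show deriv (fun t => h2 a / h1 a * u1 (a, t)) b = _
      rw [deriv_const_mul _ hsl2]
      rfl
    have C : pd2 (fun z => u2 z - z.2 * h1 z.1 * G z.1 * u1 z) (a, b)
        = pd2 u2 (a, b) - (h1 a * G a) * (u1 (a, b) + b * pd2 u1 (a, b)) := by
      show deriv (fun t => u2 (a, t) - t * h1 a * G a * u1 (a, t)) b = _
      have hfe : (fun t => u2 (a, t) - t * h1 a * G a * u1 (a, t))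
          = fun t => u2 (a, t) - (h1 a * G a) * (t * u1 (a, t)) := by
        funext t; ring
      rw [hfe]
      have hd : DifferentiableAt ℝ (fun t => t * u1 (a, t)) b :=
        differentiableAt_id.mul hsl2
      rw [deriv_fun_sub hsl3 (hd.const_mul _), deriv_const_mul _ hd,
        deriv_fun_mul differentiableAt_fun_id hsl2]
      simp [pd2]
    simp only [divh, A, B, C]
    have h1ne : h1 a ≠ 0 := (h1pos a).ne'
    have h2ne : h2 a ≠ 0 := (h2pos a).ne'
    rw [hrel] at *
    field_simp
    ring
  refine ⟨key, fun hz y hy => ?_⟩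
  rw [key y hy, hz y hy, mul_zero]
end

section
/- Let h¹(y₁,t), h²(y₁,t) be positive functions that are twice continuously differentiable in y₁ and continuously differentiable in t, with continuous mixed derivatives ∂ₜ∂_{y₁}hⁱ, and let u = (u₁,u₂) be a continuously differentiable vector field of (y,t). Then at every point (y,t): ∂̄ₜ^{h²}(h²·Ru) = 𝕁⁻¹·∂̄ₜ^{h¹}(h¹·u) + E₁, where 𝕁⁻¹ := [[1, 0], [y₂h¹∂_{y₁}(h²/h¹), h²/h¹]] and E₁ is the vector whose first component is (∂ₜh¹/h¹ − ∂ₜh²/h²)·∂_{y₂}(y₂h¹u₁) and whose second component is (∂ₜh¹/h¹ − ∂ₜh²/h²)·y₂h²·(∂_{y₂}u₂ − y₂E·∂_{y₂}u₁) + y₂u₁·(∂ₜh²·E − h²·∂ₜE), with E := h²·∂_{y₁}(h¹/h²). -/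
/-- Transformed (ALE-type) time derivative
`∂̄ₜʰ(hw) := ∂ₜ(hw) − (1/h)(∂ₜh)·∂_{y₂}(y₂·h·w)` (one component). -/
noncomputable def Dbar (h : ℝ → ℝ → ℝ) (w : ℝ → ℝ → ℝ → ℝ) (y₁ y₂ t : ℝ) : ℝ :=
  deriv (fun s => h y₁ s * w y₁ y₂ s) t
    - 1 / h y₁ t * deriv (fun s => h y₁ s) t * deriv (fun z => z * h y₁ t * w y₁ z t) y₂

/-- `E := h²·∂_{y₁}(h¹/h²)`. -/
noncomputable def Ef (h1 h2 : ℝ → ℝ → ℝ) (x t : ℝ) : ℝ :=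
  h2 x t * deriv (fun x' => h1 x' t / h2 x' t) x

/-- First component of `Ru`: `(h¹/h²)u₁`. -/
noncomputable def RuFst (h1 h2 : ℝ → ℝ → ℝ) (u1 : ℝ → ℝ → ℝ → ℝ) : ℝ → ℝ → ℝ → ℝ :=
  fun x z s => h1 x s / h2 x s * u1 x z s

/-- Second component of `Ru`: `u₂ − y₂h²∂_{y₁}(h¹/h²)u₁`. -/
noncomputable def RuSnd (h1 h2 : ℝ → ℝ → ℝ) (u1 u2 : ℝ → ℝ → ℝ → ℝ) : ℝ → ℝ → ℝ → ℝ :=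
  fun x z s => u2 x z s - z * Ef h1 h2 x s * u1 x z s

/-- `∂̄ₜ^{h²}(h²·Ru) = 𝕁⁻¹·∂̄ₜ^{h¹}(h¹·u) + E₁` componentwise at every
point `(y,t)`, with `𝕁⁻¹ = [[1,0],[y₂h¹∂_{y₁}(h²/h¹), h²/h¹]]` and the explicit
error vector `E₁`. -/
theorem Dbar_R_transform
    (h1 h2 : ℝ → ℝ → ℝ) (u1 u2 : ℝ → ℝ → ℝ → ℝ)
    (h1pos : ∀ x t, 0 < h1 x t) (h2pos : ∀ x t, 0 < h2 x t)
    (h1y : ∀ t, ContDiff ℝ 2 (fun x => h1 x t)) (h2y : ∀ t, ContDiff ℝ 2 (fun x => h2 x t))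
    (h1t : ∀ x, ContDiff ℝ 1 (fun s => h1 x s)) (h2t : ∀ x, ContDiff ℝ 1 (fun s => h2 x s))
    (h1mixd : ∀ x, Differentiable ℝ (fun s => deriv (fun x' => h1 x' s) x))
    (h2mixd : ∀ x, Differentiable ℝ (fun s => deriv (fun x' => h2 x' s) x))
    (h1mixc : Continuous (fun p : ℝ × ℝ => deriv (fun s => deriv (fun x' => h1 x' s) p.1) p.2))
    (h2mixc : Continuous (fun p : ℝ × ℝ => deriv (fun s => deriv (fun x' => h2 x' s) p.1) p.2))
    (hu1 : ContDiff ℝ 1 (fun p : ℝ × ℝ × ℝ => u1 p.1 p.2.1 p.2.2))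
    (hu2 : ContDiff ℝ 1 (fun p : ℝ × ℝ × ℝ => u2 p.1 p.2.1 p.2.2)) :
    ∀ y₁ y₂ t : ℝ,
      (Dbar h2 (RuFst h1 h2 u1) y₁ y₂ t
        = Dbar h1 u1 y₁ y₂ t
          + (deriv (fun s => h1 y₁ s) t / h1 y₁ t
             - deriv (fun s => h2 y₁ s) t / h2 y₁ t)
            * deriv (fun z => z * h1 y₁ t * u1 y₁ z t) y₂) ∧
      (Dbar h2 (RuSnd h1 h2 u1 u2) y₁ y₂ t
        = y₂ * h1 y₁ t * deriv (fun x => h2 x t / h1 x t) y₁ * Dbar h1 u1 y₁ y₂ t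
          + h2 y₁ t / h1 y₁ t * Dbar h1 u2 y₁ y₂ t
          + (deriv (fun s => h1 y₁ s) t / h1 y₁ t
             - deriv (fun s => h2 y₁ s) t / h2 y₁ t)
            * (y₂ * h2 y₁ t
                * (deriv (fun z => u2 y₁ z t) y₂
                   - y₂ * Ef h1 h2 y₁ t * deriv (fun z => u1 y₁ z t) y₂))
          + y₂ * u1 y₁ y₂ t
            * (deriv (fun s => h2 y₁ s) t * Ef h1 h2 y₁ t
               - h2 y₁ t * deriv (fun s => Ef h1 h2 y₁ s) t)) := by
  intro y₁ y₂ t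
  have hA : h1 y₁ t ≠ 0 := (h1pos y₁ t).ne'
  have hB : h2 y₁ t ≠ 0 := (h2pos y₁ t).ne'
  have hu1d : Differentiable ℝ (fun p : ℝ × ℝ × ℝ => u1 p.1 p.2.1 p.2.2) :=
    hu1.differentiable one_ne_zero
  have hu2d : Differentiable ℝ (fun p : ℝ × ℝ × ℝ => u2 p.1 p.2.1 p.2.2) :=
    hu2.differentiable one_ne_zero
  have su1t : Differentiable ℝ (fun s => u1 y₁ y₂ s) := by
    exact hu1d.comp (f := fun s : ℝ => (y₁, y₂, s)) (by fun_prop)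
  have su2t : Differentiable ℝ (fun s => u2 y₁ y₂ s) := by
    exact hu2d.comp (f := fun s : ℝ => (y₁, y₂, s)) (by fun_prop)
  have su1z : Differentiable ℝ (fun z => u1 y₁ z t) := by
    exact hu1d.comp (f := fun z : ℝ => (y₁, z, t)) (by fun_prop)
  have su2z : Differentiable ℝ (fun z => u2 y₁ z t) := by
    exact hu2d.comp (f := fun z : ℝ => (y₁, z, t)) (by fun_prop)
  have hEf : ∀ s : ℝ, Ef h1 h2 y₁ s
      = (deriv (fun x' => h1 x' s) y₁ * h2 y₁ s
          - h1 y₁ s * deriv (fun x' => h2 x' s) y₁) / h2 y₁ s := by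
    intro s
    have hBs : h2 y₁ s ≠ 0 := (h2pos y₁ s).ne'
    unfold Ef
    rw [deriv_fun_div (((h1y s).differentiable (by norm_num)) y₁)
      (((h2y s).differentiable (by norm_num)) y₁) hBs]
    field_simp
  have hEfd : DifferentiableAt ℝ (fun s => Ef h1 h2 y₁ s) t := by
    rw [show (fun s => Ef h1 h2 y₁ s)
        = fun s => (deriv (fun x' => h1 x' s) y₁ * h2 y₁ s
            - h1 y₁ s * deriv (fun x' => h2 x' s) y₁) / h2 y₁ s from funext hEf]
    exact (((h1mixd y₁ t).mul ((h2t y₁).differentiable one_ne_zero t)).sub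
      (((h1t y₁).differentiable one_ne_zero t).mul (h2mixd y₁ t))).div
      ((h2t y₁).differentiable one_ne_zero t) hB
  have Hh1 : HasDerivAt (fun s => h1 y₁ s) (deriv (fun s => h1 y₁ s) t) t :=
    (((h1t y₁).differentiable one_ne_zero) t).hasDerivAt
  have Hh2 : HasDerivAt (fun s => h2 y₁ s) (deriv (fun s => h2 y₁ s) t) t :=
    (((h2t y₁).differentiable one_ne_zero) t).hasDerivAt
  have HE : HasDerivAt (fun s => Ef h1 h2 y₁ s) (deriv (fun s => Ef h1 h2 y₁ s) t) t :=
    hEfd.hasDerivAt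
  have Hu1t : HasDerivAt (fun s => u1 y₁ y₂ s) (deriv (fun s => u1 y₁ y₂ s) t) t :=
    (su1t t).hasDerivAt
  have Hu2t : HasDerivAt (fun s => u2 y₁ y₂ s) (deriv (fun s => u2 y₁ y₂ s) t) t :=
    (su2t t).hasDerivAt
  have Hu1z : HasDerivAt (fun z => u1 y₁ z t) (deriv (fun z => u1 y₁ z t) y₂) y₂ :=
    (su1z y₂).hasDerivAt
  have Hu2z : HasDerivAt (fun z => u2 y₁ z t) (deriv (fun z => u2 y₁ z t) y₂) y₂ :=
    (su2z y₂).hasDerivAt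
  constructor
  · have e1 : (fun s => h2 y₁ s * RuFst h1 h2 u1 y₁ y₂ s)
        = fun s => h1 y₁ s * u1 y₁ y₂ s := by
      funext s
      have hBs : h2 y₁ s ≠ 0 := (h2pos y₁ s).ne'
      unfold RuFst
      field_simp
    have e2 : (fun z => z * h2 y₁ t * RuFst h1 h2 u1 y₁ z t)
        = fun z => z * h1 y₁ t * u1 y₁ z t := by
      funext z
      unfold RuFst
      field_simp
    unfold Dbar
    rw [e1, e2]
    field_simp
    ring
  · have P1d : deriv (fun s => h2 y₁ s * RuSnd h1 h2 u1 u2 y₁ y₂ s) t = _ :=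
      (Hh2.mul (Hu2t.sub (((hasDerivAt_const t y₂).mul HE).mul Hu1t))).deriv
    have P2d : deriv (fun z => z * h2 y₁ t * RuSnd h1 h2 u1 u2 y₁ z t) y₂ = _ :=
      (((hasDerivAt_id' (x := y₂)).mul (hasDerivAt_const y₂ (h2 y₁ t))).mul
        (Hu2z.sub (((hasDerivAt_id' (x := y₂)).mul
          (hasDerivAt_const y₂ (Ef h1 h2 y₁ t))).mul Hu1z))).deriv
    have P3t : deriv (fun s => h1 y₁ s * u1 y₁ y₂ s) t = _ := (Hh1.mul Hu1t).deriv
    have P3z : deriv (fun z => z * h1 y₁ t * u1 y₁ z t) y₂ = _ :=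
      (((hasDerivAt_id' (x := y₂)).mul (hasDerivAt_const y₂ (h1 y₁ t))).mul Hu1z).deriv
    have P4t : deriv (fun s => h1 y₁ s * u2 y₁ y₂ s) t = _ := (Hh1.mul Hu2t).deriv
    have P4z : deriv (fun z => z * h1 y₁ t * u2 y₁ z t) y₂ = _ :=
      (((hasDerivAt_id' (x := y₂)).mul (hasDerivAt_const y₂ (h1 y₁ t))).mul Hu2z).deriv
    unfold Dbar
    rw [P1d, P2d, P3t, P3z, P4t, P4z,
      deriv_fun_div (((h2y t).differentiable (by norm_num)) y₁)
        (((h1y t).differentiable (by norm_num)) y₁) hA, hEf t]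
    simp only [Pi.mul_apply, Pi.sub_apply, hEf t]
    field_simp
    ring
end

section
/- Let L > 0, let D = [0,L] × [0,1], and let v : D → ℝ² be continuously differentiable. Then for every y₁ ∈ [0,L]: ∫₀¹ |v(y₁,y₂)|² dy₂ ≤ ∫₀¹ |v(0,y₂)|² dy₂ + 2·(∫_D |v|² dy)^{1/2} · (∫_D |∇v|² dy)^{1/2}, where |∇v|² denotes the sum of the squares of all first-order partial derivatives of the components of v. -/
open MeasureTheory

lemma slice_hasDerivAt1 {f : ℝ × ℝ → ℝ} {S : Set (ℝ × ℝ)} (hf : ContDiffOn ℝ 1 f S)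
    {y : ℝ × ℝ} (hy : S ∈ nhds y) :
    HasDerivAt (fun t => f (t, y.2)) (fderivWithin ℝ f S y (1, 0)) y.1 := by
  have hdiff : DifferentiableAt ℝ f y := (hf.contDiffAt hy).differentiableAt one_ne_zero
  have hfw : fderivWithin ℝ f S y = fderiv ℝ f y := fderivWithin_of_mem_nhds hy
  have h2 : HasDerivAt (fun t : ℝ => (t, y.2)) ((1:ℝ), (0:ℝ)) y.1 :=
    (hasDerivAt_id y.1).prodMk (hasDerivAt_const _ _)
  have h1 : HasFDerivAt f (fderiv ℝ f y) (y.1, y.2) := by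
    rw [Prod.mk.eta]; exact hdiff.hasFDerivAt
  have h3 := h1.comp_hasDerivAt y.1 h2
  rw [hfw]
  exact h3

lemma slice_hasDerivAt2 {f : ℝ × ℝ → ℝ} {S : Set (ℝ × ℝ)} (hf : ContDiffOn ℝ 1 f S)
    {y : ℝ × ℝ} (hy : S ∈ nhds y) :
    HasDerivAt (fun t => f (y.1, t)) (fderivWithin ℝ f S y (0, 1)) y.2 := by
  have hdiff : DifferentiableAt ℝ f y := (hf.contDiffAt hy).differentiableAt one_ne_zero
  have hfw : fderivWithin ℝ f S y = fderiv ℝ f y := fderivWithin_of_mem_nhds hy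
  have h2 : HasDerivAt (fun t : ℝ => (y.1, t)) ((0:ℝ), (1:ℝ)) y.2 :=
    (hasDerivAt_const _ _).prodMk (hasDerivAt_id y.2)
  have h1 : HasFDerivAt f (fderiv ℝ f y) (y.1, y.2) := by
    rw [Prod.mk.eta]; exact hdiff.hasFDerivAt
  have h3 := h1.comp_hasDerivAt y.2 h2
  rw [hfw]
  exact h3

lemma pd1_eq {f : ℝ × ℝ → ℝ} {S : Set (ℝ × ℝ)} (hf : ContDiffOn ℝ 1 f S)
    {y : ℝ × ℝ} (hy : S ∈ nhds y) : pd1 f y = fderivWithin ℝ f S y (1, 0) :=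
  (slice_hasDerivAt1 hf hy).deriv

lemma pd2_eq {f : ℝ × ℝ → ℝ} {S : Set (ℝ × ℝ)} (hf : ContDiffOn ℝ 1 f S)
    {y : ℝ × ℝ} (hy : S ∈ nhds y) : pd2 f y = fderivWithin ℝ f S y (0, 1) :=
  (slice_hasDerivAt2 hf hy).deriv

/-- for `v` continuously differentiable on `D = [0,L]×[0,1]`,
`∫₀¹ |v(y₁,·)|² ≤ ∫₀¹ |v(0,·)|² + 2(∫_D|v|²)^{1/2}(∫_D|∇v|²)^{1/2}`
for every `y₁ ∈ [0,L]`. -/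
theorem line_integral_estimate
    (L : ℝ) (hL : 0 < L) (v1 v2 : ℝ × ℝ → ℝ)
    (hv1 : ContDiffOn ℝ 1 v1 (Set.Icc (0:ℝ) L ×ˢ Set.Icc (0:ℝ) 1))
    (hv2 : ContDiffOn ℝ 1 v2 (Set.Icc (0:ℝ) L ×ˢ Set.Icc (0:ℝ) 1)) :
    ∀ y₁ ∈ Set.Icc (0:ℝ) L,
      (∫ y₂ in (0:ℝ)..1, (v1 (y₁, y₂) ^ 2 + v2 (y₁, y₂) ^ 2))
        ≤ (∫ y₂ in (0:ℝ)..1, (v1 (0, y₂) ^ 2 + v2 (0, y₂) ^ 2))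
          + 2 * Real.sqrt (∫ y in Set.Icc (0:ℝ) L ×ˢ Set.Icc (0:ℝ) 1,
                (v1 y ^ 2 + v2 y ^ 2))
              * Real.sqrt (∫ y in Set.Icc (0:ℝ) L ×ˢ Set.Icc (0:ℝ) 1,
                (pd1 v1 y ^ 2 + pd2 v1 y ^ 2 + pd1 v2 y ^ 2 + pd2 v2 y ^ 2)) := by
  intro y₁ hy₁
  set S : Set (ℝ × ℝ) := Set.Icc (0:ℝ) L ×ˢ Set.Icc (0:ℝ) 1 with hSdef
  have hSm : MeasurableSet S := measurableSet_Icc.prod measurableSet_Icc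
  have hScomp : IsCompact S := isCompact_Icc.prod isCompact_Icc
  have hUD : UniqueDiffOn ℝ S := (uniqueDiffOn_Icc hL).prod (uniqueDiffOn_Icc one_pos)
  have hIntS : interior S = Set.Ioo (0:ℝ) L ×ˢ Set.Ioo (0:ℝ) 1 := by
    rw [hSdef, interior_prod_eq, interior_Icc, interior_Icc]
  -- the partial derivatives as continuous functions on S
  set K11 : ℝ × ℝ → ℝ := fun y => fderivWithin ℝ v1 S y (1, 0) with hK11
  set K12 : ℝ × ℝ → ℝ := fun y => fderivWithin ℝ v1 S y (0, 1) with hK12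
  set K21 : ℝ × ℝ → ℝ := fun y => fderivWithin ℝ v2 S y (1, 0) with hK21
  set K22 : ℝ × ℝ → ℝ := fun y => fderivWithin ℝ v2 S y (0, 1) with hK22
  have hfd1 : ContinuousOn (fun y => fderivWithin ℝ v1 S y) S :=
    hv1.continuousOn_fderivWithin hUD le_rfl
  have hfd2 : ContinuousOn (fun y => fderivWithin ℝ v2 S y) S :=
    hv2.continuousOn_fderivWithin hUD le_rfl
  have hK11c : ContinuousOn K11 S :=
    (ContinuousLinearMap.apply ℝ ℝ ((1:ℝ), (0:ℝ))).continuous.comp_continuousOn hfd1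
  have hK12c : ContinuousOn K12 S :=
    (ContinuousLinearMap.apply ℝ ℝ ((0:ℝ), (1:ℝ))).continuous.comp_continuousOn hfd1
  have hK21c : ContinuousOn K21 S :=
    (ContinuousLinearMap.apply ℝ ℝ ((1:ℝ), (0:ℝ))).continuous.comp_continuousOn hfd2
  have hK22c : ContinuousOn K22 S :=
    (ContinuousLinearMap.apply ℝ ℝ ((0:ℝ), (1:ℝ))).continuous.comp_continuousOn hfd2
  have hv1c : ContinuousOn v1 S := hv1.continuousOn
  have hv2c : ContinuousOn v2 S := hv2.continuousOn
  set W : ℝ × ℝ → ℝ := fun y => 2 * v1 y * K11 y + 2 * v2 y * K21 y with hW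
  have hWc : ContinuousOn W S :=
    (((continuousOn_const.mul hv1c).mul hK11c).add ((continuousOn_const.mul hv2c).mul hK21c))
  -- a.e. point of S is interior
  have haeI : ∀ᵐ y ∂(volume.restrict S), y ∈ Set.Ioo (0:ℝ) L ×ˢ Set.Ioo (0:ℝ) 1 := by
    have h0 : (volume : Measure (ℝ × ℝ)) (frontier S) = 0 :=
      Convex.addHaar_frontier volume ((convex_Icc _ _).prod (convex_Icc _ _))
    rw [ae_restrict_iff' hSm]
    rw [ae_iff]
    refine measure_mono_null (fun y hy => ?_) h0
    simp only [Set.mem_setOf_eq, not_forall] at hy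
    obtain ⟨hyS, hyI⟩ := hy
    rw [← hIntS] at hyI
    rw [frontier, hScomp.isClosed.closure_eq]
    exact ⟨hyS, hyI⟩
  -- FTC step
  have hFTC : ∀ y₂ ∈ Set.Ioo (0:ℝ) 1,
      (v1 (y₁, y₂) ^ 2 + v2 (y₁, y₂) ^ 2) - (v1 (0, y₂) ^ 2 + v2 (0, y₂) ^ 2)
        = ∫ t in (0:ℝ)..y₁, W (t, y₂) := by
    intro y₂ hy₂
    have hy₂' : y₂ ∈ Set.Icc (0:ℝ) 1 := Set.Ioo_subset_Icc_self hy₂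
    have hmaps : Set.MapsTo (fun t : ℝ => (t, y₂)) (Set.Icc 0 y₁) S :=
      fun t ht => ⟨⟨ht.1, le_trans ht.2 hy₁.2⟩, hy₂'⟩
    have hcurve : Continuous (fun t : ℝ => (t, y₂)) := continuous_id.prodMk continuous_const
    have hcont : ContinuousOn (fun t => v1 (t, y₂) ^ 2 + v2 (t, y₂) ^ 2) (Set.Icc 0 y₁) :=
      ((hv1c.comp hcurve.continuousOn hmaps).pow 2).add
        ((hv2c.comp hcurve.continuousOn hmaps).pow 2)
    have hderiv : ∀ t ∈ Set.Ioo 0 y₁,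
        HasDerivAt (fun t => v1 (t, y₂) ^ 2 + v2 (t, y₂) ^ 2) (W (t, y₂)) t := by
      intro t ht
      have hnh : S ∈ nhds (t, y₂) := by
        rw [← mem_interior_iff_mem_nhds, hIntS]
        exact ⟨⟨ht.1, lt_of_lt_of_le ht.2 hy₁.2⟩, hy₂⟩
      have h1 : HasDerivAt (fun s => v1 (s, y₂)) (K11 (t, y₂)) t := slice_hasDerivAt1 hv1 hnh
      have h2 : HasDerivAt (fun s => v2 (s, y₂)) (K21 (t, y₂)) t := slice_hasDerivAt1 hv2 hnh
      have h3 := (h1.fun_pow 2).fun_add (h2.fun_pow 2)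
      refine h3.congr_deriv ?_
      show _ = 2 * v1 (t, y₂) * K11 (t, y₂) + 2 * v2 (t, y₂) * K21 (t, y₂)
      ring
    have hmaps' : Set.MapsTo (fun t : ℝ => (t, y₂)) (Set.uIcc 0 y₁) S := by
      rw [Set.uIcc_of_le hy₁.1]; exact hmaps
    have hint : IntervalIntegrable (fun t => W (t, y₂)) volume 0 y₁ :=
      (hWc.comp hcurve.continuousOn hmaps').intervalIntegrable
    have := intervalIntegral.integral_eq_sub_of_hasDerivAt_of_le hy₁.1 hcont hderiv hint
    rw [this]
  -- χ : the y₂-marginal of |W| over the rectangle, via indicator & Fubini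
  set T : Set (ℝ × ℝ) := Set.Icc (0:ℝ) 1 ×ˢ Set.Icc (0:ℝ) L with hTdef
  have hTm : MeasurableSet T := measurableSet_Icc.prod measurableSet_Icc
  have hTcomp : IsCompact T := isCompact_Icc.prod isCompact_Icc
  set F' : ℝ × ℝ → ℝ := T.indicator (fun z => |W (z.2, z.1)|) with hF'def
  have hWswapc : ContinuousOn (fun z : ℝ × ℝ => |W (z.2, z.1)|) T :=
    (hWc.comp continuous_swap.continuousOn (fun z hz => ⟨hz.2, hz.1⟩)).abs
  have hF'int : Integrable F' volume :=
    (integrable_indicator_iff hTm).2 (hWswapc.integrableOn_compact hTcomp)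
  have hvol : (volume : Measure (ℝ × ℝ)) = (volume : Measure ℝ).prod volume := Measure.volume_eq_prod ℝ ℝ
  have hF'int' : Integrable F' ((volume : Measure ℝ).prod volume) := hvol ▸ hF'int
  set χ : ℝ → ℝ := fun y₂ => ∫ t, F' (y₂, t) with hχdef
  have hχint : Integrable χ volume := hF'int'.integral_prod_left
  have hχnonneg : ∀ y₂, 0 ≤ χ y₂ :=
    fun y₂ => integral_nonneg (fun t => Set.indicator_nonneg (fun z _ => abs_nonneg _) _)
  have hχtot : ∫ y₂, χ y₂ = ∫ y in S, |W y| := by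
    have h1 : ∫ y₂, χ y₂ = ∫ z, F' z ∂((volume : Measure ℝ).prod volume) :=
      integral_integral hF'int'
    have h2 : ∫ z, F' z ∂((volume : Measure ℝ).prod volume) = ∫ z in T, |W (z.2, z.1)|
        ∂((volume : Measure ℝ).prod volume) := integral_indicator hTm
    have h3 : ∫ z in T, |W (z.2, z.1)| ∂((volume : Measure ℝ).prod volume)
        = ∫ y in S, |W y| ∂((volume : Measure ℝ).prod volume) := by
      have hpre : Prod.swap ⁻¹' S = T := by rw [hSdef, hTdef, Set.preimage_swap_prod]
      have := (Measure.measurePreserving_swap (μ := (volume : Measure ℝ)) (ν := volume)).setIntegral_preimage_emb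
        (MeasurableEquiv.prodComm (α := ℝ) (β := ℝ)).measurableEmbedding (fun y => |W y|) S
      rw [hpre] at this
      exact this
    rw [h1, h2, h3, ← hvol]
  have hχge : ∀ y₂ ∈ Set.Ioo (0:ℝ) 1, (∫ t in (0:ℝ)..y₁, W (t, y₂)) ≤ χ y₂ := by
    intro y₂ hy₂
    have hy₂' : y₂ ∈ Set.Icc (0:ℝ) 1 := Set.Ioo_subset_Icc_self hy₂
    have hcurve : Continuous (fun t : ℝ => (t, y₂)) := continuous_id.prodMk continuous_const
    have hmapsL : Set.MapsTo (fun t : ℝ => (t, y₂)) (Set.Icc 0 L) S := fun t ht => ⟨ht, hy₂'⟩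
    have hWsl : ContinuousOn (fun t => |W (t, y₂)|) (Set.Icc 0 L) :=
      (hWc.comp hcurve.continuousOn hmapsL).abs
    have hintL : IntervalIntegrable (fun t => |W (t, y₂)|) volume 0 L := by
      apply ContinuousOn.intervalIntegrable
      rwa [Set.uIcc_of_le hL.le]
    have h1 : (∫ t in (0:ℝ)..y₁, W (t, y₂)) ≤ ∫ t in (0:ℝ)..y₁, |W (t, y₂)| :=
      le_trans (le_abs_self _) (intervalIntegral.abs_integral_le_integral_abs hy₁.1)
    have h2 : (∫ t in (0:ℝ)..y₁, |W (t, y₂)|) ≤ ∫ t in (0:ℝ)..L, |W (t, y₂)| :=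
      intervalIntegral.integral_mono_interval le_rfl hy₁.1 hy₁.2
        (Filter.Eventually.of_forall fun t => abs_nonneg _) hintL
    have h3 : (∫ t in (0:ℝ)..L, |W (t, y₂)|) = χ y₂ := by
      have hsl : ∀ t, F' (y₂, t) = (Set.Icc (0:ℝ) L).indicator (fun t => |W (t, y₂)|) t := by
        intro t
        by_cases ht : t ∈ Set.Icc (0:ℝ) L
        · rw [Set.indicator_of_mem ht, hF'def, Set.indicator_of_mem (Set.mk_mem_prod hy₂' ht)]
        · rw [Set.indicator_of_notMem ht, hF'def,
            Set.indicator_of_notMem (fun hmem => ht hmem.2)]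
      calc (∫ t in (0:ℝ)..L, |W (t, y₂)|)
          = ∫ t in Set.Ioc (0:ℝ) L, |W (t, y₂)| := intervalIntegral.integral_of_le hL.le
        _ = ∫ t in Set.Icc (0:ℝ) L, |W (t, y₂)| := (integral_Icc_eq_integral_Ioc).symm
        _ = ∫ t, (Set.Icc (0:ℝ) L).indicator (fun t => |W (t, y₂)|) t :=
            (integral_indicator measurableSet_Icc).symm
        _ = χ y₂ := by
            rw [hχdef]
            exact integral_congr_ae (Filter.Eventually.of_forall fun t => (hsl t).symm)
    linarith [h1, h2]
  -- integrate the identity over y₂ and bound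
  have hcurve0 : Continuous (fun y₂ : ℝ => ((0:ℝ), y₂)) := continuous_const.prodMk continuous_id
  have hcurvey : Continuous (fun y₂ : ℝ => (y₁, y₂)) := continuous_const.prodMk continuous_id
  have hmaps0 : Set.MapsTo (fun y₂ : ℝ => ((0:ℝ), y₂)) (Set.uIcc 0 1) S := by
    rw [Set.uIcc_of_le zero_le_one]
    exact fun t ht => ⟨⟨le_rfl, hL.le⟩, ht⟩
  have hmapsy : Set.MapsTo (fun y₂ : ℝ => (y₁, y₂)) (Set.uIcc 0 1) S := by
    rw [Set.uIcc_of_le zero_le_one]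
    exact fun t ht => ⟨hy₁, ht⟩
  have hAint : IntervalIntegrable (fun y₂ => v1 (y₁, y₂) ^ 2 + v2 (y₁, y₂) ^ 2) volume 0 1 :=
    (((hv1c.comp hcurvey.continuousOn hmapsy).pow 2).add
      ((hv2c.comp hcurvey.continuousOn hmapsy).pow 2)).intervalIntegrable
  have hBint : IntervalIntegrable (fun y₂ => v1 (0, y₂) ^ 2 + v2 (0, y₂) ^ 2) volume 0 1 :=
    (((hv1c.comp hcurve0.continuousOn hmaps0).pow 2).add
      ((hv2c.comp hcurve0.continuousOn hmaps0).pow 2)).intervalIntegrable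
  have haeIoc : ∀ᵐ y₂ ∂volume.restrict (Set.Ioc (0:ℝ) 1), y₂ ∈ Set.Ioo (0:ℝ) 1 := by
    rw [ae_restrict_iff' measurableSet_Ioc, ae_iff]
    refine measure_mono_null (fun x hx => ?_) (measure_singleton (1:ℝ))
    simp only [Set.mem_setOf_eq, not_forall] at hx
    obtain ⟨hx1, hx2⟩ := hx
    have : x = 1 := le_antisymm hx1.2 (not_lt.1 fun h => hx2 ⟨hx1.1, h⟩)
    simp [this]
  have key : (∫ y₂ in (0:ℝ)..1, (v1 (y₁, y₂) ^ 2 + v2 (y₁, y₂) ^ 2))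
      - (∫ y₂ in (0:ℝ)..1, (v1 (0, y₂) ^ 2 + v2 (0, y₂) ^ 2)) ≤ ∫ y in S, |W y| := by
    have e1 : (∫ y₂ in (0:ℝ)..1, (v1 (y₁, y₂) ^ 2 + v2 (y₁, y₂) ^ 2))
        - (∫ y₂ in (0:ℝ)..1, (v1 (0, y₂) ^ 2 + v2 (0, y₂) ^ 2))
        = ∫ y₂ in (0:ℝ)..1,
            ((v1 (y₁, y₂) ^ 2 + v2 (y₁, y₂) ^ 2) - (v1 (0, y₂) ^ 2 + v2 (0, y₂) ^ 2)) :=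
      (intervalIntegral.integral_sub hAint hBint).symm
    have e2 : (∫ y₂ in (0:ℝ)..1,
          ((v1 (y₁, y₂) ^ 2 + v2 (y₁, y₂) ^ 2) - (v1 (0, y₂) ^ 2 + v2 (0, y₂) ^ 2)))
        = ∫ y₂ in Set.Ioc (0:ℝ) 1,
            ((v1 (y₁, y₂) ^ 2 + v2 (y₁, y₂) ^ 2) - (v1 (0, y₂) ^ 2 + v2 (0, y₂) ^ 2)) :=
      intervalIntegral.integral_of_le zero_le_one
    have e3 : (∫ y₂ in Set.Ioc (0:ℝ) 1,
          ((v1 (y₁, y₂) ^ 2 + v2 (y₁, y₂) ^ 2) - (v1 (0, y₂) ^ 2 + v2 (0, y₂) ^ 2)))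
        ≤ ∫ y₂ in Set.Ioc (0:ℝ) 1, χ y₂ := by
      refine integral_mono_ae ((hAint.sub hBint).1) hχint.integrableOn ?_
      filter_upwards [haeIoc] with y₂ hy₂
      rw [hFTC y₂ hy₂]
      exact hχge y₂ hy₂
    have e4 : (∫ y₂ in Set.Ioc (0:ℝ) 1, χ y₂) ≤ ∫ y₂, χ y₂ :=
      setIntegral_le_integral hχint (Filter.Eventually.of_forall hχnonneg)
    rw [e1, e2, ← hχtot]
    linarith
  -- Cauchy–Schwarz
  haveI : IsFiniteMeasure (volume.restrict S) :=
    ⟨by rw [Measure.restrict_apply_univ]; exact hScomp.measure_lt_top⟩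
  set f : ℝ × ℝ → ℝ := fun y => Real.sqrt (v1 y ^ 2 + v2 y ^ 2) with hfdef
  set g : ℝ × ℝ → ℝ := fun y => Real.sqrt (K11 y ^ 2 + K12 y ^ 2 + K21 y ^ 2 + K22 y ^ 2)
    with hgdef
  have hFc : ContinuousOn (fun y => v1 y ^ 2 + v2 y ^ 2) S := (hv1c.pow 2).add (hv2c.pow 2)
  have hGc : ContinuousOn (fun y => K11 y ^ 2 + K12 y ^ 2 + K21 y ^ 2 + K22 y ^ 2) S :=
    (((hK11c.pow 2).add (hK12c.pow 2)).add (hK21c.pow 2)).add (hK22c.pow 2)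
  have hfc : ContinuousOn f S := Real.continuous_sqrt.comp_continuousOn hFc
  have hgc : ContinuousOn g S := Real.continuous_sqrt.comp_continuousOn hGc
  obtain ⟨Cf, hCf⟩ := hScomp.exists_bound_of_continuousOn hfc
  obtain ⟨Cg, hCg⟩ := hScomp.exists_bound_of_continuousOn hgc
  have hf2 : MemLp f (ENNReal.ofReal 2) (volume.restrict S) :=
    MemLp.of_bound (hfc.aestronglyMeasurable hSm) Cf
      ((ae_restrict_iff' hSm).2 (Filter.Eventually.of_forall hCf))
  have hg2 : MemLp g (ENNReal.ofReal 2) (volume.restrict S) :=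
    MemLp.of_bound (hgc.aestronglyMeasurable hSm) Cg
      ((ae_restrict_iff' hSm).2 (Filter.Eventually.of_forall hCg))
  have hconj : Real.HolderConjugate 2 2 := Real.HolderConjugate.two_two
  have hCS := integral_mul_le_Lp_mul_Lq_of_nonneg hconj
    (Filter.Eventually.of_forall fun y => Real.sqrt_nonneg _)
    (Filter.Eventually.of_forall fun y => Real.sqrt_nonneg _) hf2 hg2
  have hfpow : ∀ y, f y ^ (2:ℝ) = v1 y ^ 2 + v2 y ^ 2 := by
    intro y
    rw [hfdef, show ((2:ℝ)) = ((2:ℕ):ℝ) by norm_num, Real.rpow_natCast]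
    exact Real.sq_sqrt (by positivity)
  have hgpow : ∀ y, g y ^ (2:ℝ) = K11 y ^ 2 + K12 y ^ 2 + K21 y ^ 2 + K22 y ^ 2 := by
    intro y
    rw [hgdef, show ((2:ℝ)) = ((2:ℕ):ℝ) by norm_num, Real.rpow_natCast]
    exact Real.sq_sqrt (by positivity)
  rw [integral_congr_ae (Filter.Eventually.of_forall hfpow),
    integral_congr_ae (Filter.Eventually.of_forall hgpow)] at hCS
  -- pointwise Cauchy-Schwarz
  have hptw : ∀ y, |W y| ≤ 2 * (f y * g y) := by
    intro y
    have hf2' : f y ^ 2 = v1 y ^ 2 + v2 y ^ 2 := Real.sq_sqrt (by positivity)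
    have hg2' : g y ^ 2 = K11 y ^ 2 + K12 y ^ 2 + K21 y ^ 2 + K22 y ^ 2 :=
      Real.sq_sqrt (by positivity)
    have hsq : (W y) ^ 2 ≤ (2 * (f y * g y)) ^ 2 := by
      have h1 : W y = 2 * v1 y * K11 y + 2 * v2 y * K21 y := rfl
      have hexp : (2 * (f y * g y)) ^ 2
          = 4 * ((v1 y ^ 2 + v2 y ^ 2) * (K11 y ^ 2 + K12 y ^ 2 + K21 y ^ 2 + K22 y ^ 2)) := by
        rw [mul_pow, mul_pow, hf2', hg2']; ring
      rw [h1, hexp]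
      nlinarith [sq_nonneg (v1 y * K21 y - v2 y * K11 y),
        mul_nonneg (add_nonneg (sq_nonneg (v1 y)) (sq_nonneg (v2 y)))
          (add_nonneg (sq_nonneg (K12 y)) (sq_nonneg (K22 y)))]
    calc |W y| = Real.sqrt ((W y) ^ 2) := (Real.sqrt_sq_eq_abs _).symm
      _ ≤ Real.sqrt ((2 * (f y * g y)) ^ 2) := Real.sqrt_le_sqrt hsq
      _ = 2 * (f y * g y) := Real.sqrt_sq (by positivity)
  have hWint : IntegrableOn (fun y => |W y|) S := (hWc.abs).integrableOn_compact hScomp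
  have hfgint : IntegrableOn (fun y => 2 * (f y * g y)) S :=
    (continuousOn_const.mul (hfc.mul hgc)).integrableOn_compact hScomp
  have h5 : (∫ y in S, |W y|) ≤ ∫ y in S, 2 * (f y * g y) :=
    integral_mono hWint hfgint hptw
  have h6 : (∫ y in S, 2 * (f y * g y)) = 2 * ∫ y in S, f y * g y := integral_const_mul 2 _
  -- replace K by pd in the gradient integral
  have hGpd : (∫ y in S, (K11 y ^ 2 + K12 y ^ 2 + K21 y ^ 2 + K22 y ^ 2))
      = ∫ y in S, (pd1 v1 y ^ 2 + pd2 v1 y ^ 2 + pd1 v2 y ^ 2 + pd2 v2 y ^ 2) := by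
    refine integral_congr_ae ?_
    filter_upwards [haeI] with y hy
    have hnh : S ∈ nhds y := by
      rw [← mem_interior_iff_mem_nhds, hIntS]; exact hy
    rw [pd1_eq hv1 hnh, pd2_eq hv1 hnh, pd1_eq hv2 hnh, pd2_eq hv2 hnh]
  rw [hGpd] at hCS
  have hsq1 : ((∫ y in S, (v1 y ^ 2 + v2 y ^ 2)) ^ ((1:ℝ)/2))
      = Real.sqrt (∫ y in S, (v1 y ^ 2 + v2 y ^ 2)) := by
    rw [Real.sqrt_eq_rpow]
  have hsq2 : ((∫ y in S, (pd1 v1 y ^ 2 + pd2 v1 y ^ 2 + pd1 v2 y ^ 2 + pd2 v2 y ^ 2)) ^ ((1:ℝ)/2))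
      = Real.sqrt (∫ y in S, (pd1 v1 y ^ 2 + pd2 v1 y ^ 2 + pd1 v2 y ^ 2 + pd2 v2 y ^ 2)) := by
    rw [Real.sqrt_eq_rpow]
  rw [hsq1, hsq2] at hCS
  linarith
end

section
/- Let α ∈ (0,1) and K > 0, and let h¹, h² be positive twice continuously differentiable real functions of y₁ satisfying α ≤ hⁱ(y₁) ≤ α⁻¹ and |∂_{y₁}hⁱ(y₁)| ≤ K for i = 1,2. Then there exists a constant C depending only on α and K such that for every continuously differentiable vector field v and every point y = (y₁,y₂) with y₂ ∈ [0,1], each entry of the matrix E₂(v)(y) is bounded in absolute value by C·[ (|h̄| + |∂_{y₁}h̄|)·(|v| + |∇v|) + (|h̄|·|∂²_{y₁}h¹| + |∂²_{y₁}h̄|)·|v| ] evaluated at y, where h̄ := h¹ − h². -/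
open Matrix

/-- `E := h²·∂_{y₁}(h¹/h²)`. -/
noncomputable def Efun (h1 h2 : ℝ → ℝ) (x : ℝ) : ℝ :=
  h2 x * deriv (fun t => h1 t / h2 t) x

/-- The error matrix `E₂(v)`. -/
noncomputable def E2mat (h1 h2 : ℝ → ℝ) (v1 : ℝ × ℝ → ℝ) (y : ℝ × ℝ) :
    Matrix (Fin 2) (Fin 2) ℝ :=
  !![v1 y * Efun h1 h2 y.1 / h2 y.1 + (h1 y.1 - h2 y.1) / h2 y.1 * pd1 v1 y,
     (h1 y.1 - h2 y.1) / h2 y.1 * pd2 v1 y;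
     -y.2 * pd1 (fun z => Efun h1 h2 z.1 * v1 z) y,
     -Efun h1 h2 y.1 * pd2 (fun z => z.2 * v1 z) y]

lemma tri4 (a b c d : ℝ) : |a - b - c + d| ≤ |a| + |b| + |c| + |d| := by
  calc |a - b - c + d| ≤ |a - b - c| + |d| := abs_add_le _ _
    _ ≤ |a - b| + |c| + |d| := by linarith [abs_sub (a - b) c]
    _ ≤ |a| + |b| + |c| + |d| := by linarith [abs_sub a b]

lemma abs_le_sqrt' {a s : ℝ} (h : a ^ 2 ≤ s) : |a| ≤ Real.sqrt s := by
  rw [← Real.sqrt_sq_eq_abs]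
  exact Real.sqrt_le_sqrt h

set_option maxHeartbeats 2000000 in
/-- entrywise bound for `E₂(v)` by
`C·[(|h̄|+|∂h̄|)(|v|+|∇v|) + (|h̄||∂²h¹|+|∂²h̄|)|v|]`, with `C = C(α,K)` only. -/
theorem E2mat_entry_bound
    (α K : ℝ) (hα : α ∈ Set.Ioo (0:ℝ) 1) (hK : 0 < K) :
    ∃ C > 0, ∀ h1 h2 : ℝ → ℝ,
      (∀ x, 0 < h1 x) → (∀ x, 0 < h2 x) →
      ContDiff ℝ 2 h1 → ContDiff ℝ 2 h2 →
      (∀ x, α ≤ h1 x) → (∀ x, h1 x ≤ α⁻¹) →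
      (∀ x, α ≤ h2 x) → (∀ x, h2 x ≤ α⁻¹) →
      (∀ x, |deriv h1 x| ≤ K) → (∀ x, |deriv h2 x| ≤ K) →
      ∀ v1 v2 : ℝ × ℝ → ℝ, ContDiff ℝ 1 v1 → ContDiff ℝ 1 v2 →
      ∀ y : ℝ × ℝ, y.2 ∈ Set.Icc (0:ℝ) 1 →
      ∀ i j : Fin 2,
        |E2mat h1 h2 v1 y i j|
          ≤ C * ((|h1 y.1 - h2 y.1| + |deriv (fun x => h1 x - h2 x) y.1|)
                  * (Real.sqrt (v1 y ^ 2 + v2 y ^ 2)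
                     + Real.sqrt (pd1 v1 y ^ 2 + pd2 v1 y ^ 2
                                   + pd1 v2 y ^ 2 + pd2 v2 y ^ 2))
                + (|h1 y.1 - h2 y.1| * |deriv (deriv h1) y.1|
                   + |deriv (deriv (fun x => h1 x - h2 x)) y.1|)
                  * Real.sqrt (v1 y ^ 2 + v2 y ^ 2)) := by
  obtain ⟨hα0, hα1⟩ := hα
  have hε0 : (0:ℝ) < α⁻¹ := by positivity
  have hαε : α * α⁻¹ = 1 := mul_inv_cancel₀ hα0.ne'
  have hε1 : (1:ℝ) ≤ α⁻¹ := by nlinarith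
  set c : ℝ := (1 + K) * α⁻¹ with hcdef
  have hc0 : 0 < c := by positivity
  have hεc : α⁻¹ ≤ c := by rw [hcdef]; nlinarith
  have hKεc : K * α⁻¹ ≤ c := by rw [hcdef]; nlinarith
  have hc1 : 1 ≤ c := le_trans hε1 hεc
  have hcsq : c ≤ c ^ 2 := by nlinarith
  have hc2one : 1 ≤ c ^ 2 := le_trans hc1 hcsq
  refine ⟨4 * c ^ 2, by positivity, ?_⟩
  intro h1 h2 h1pos h2pos h1c h2c hl1 hu1 hl2 hu2 hK1 hK2 v1 v2 hv1 hv2 y hy i j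
  have hd1 : Differentiable ℝ h1 := h1c.differentiable two_ne_zero
  have hd2 : Differentiable ℝ h2 := h2c.differentiable two_ne_zero
  have hder : ∀ f : ℝ → ℝ, ContDiff ℝ 2 f → Differentiable ℝ (deriv f) := by
    intro f hf
    have h2' : ContDiff ℝ (1+1) f := by norm_num; exact hf
    exact ((contDiff_succ_iff_deriv.mp h2').2.2).differentiable one_ne_zero
  have hd1' : Differentiable ℝ (deriv h1) := hder h1 h1c
  have hd2' : Differentiable ℝ (deriv h2) := hder h2 h2c
  set g : ℝ → ℝ := fun x => h1 x - h2 x with hgdef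
  have hdg : Differentiable ℝ g := hd1.sub hd2
  have hderg : deriv g = fun x => deriv h1 x - deriv h2 x := by
    funext x; exact deriv_sub (hd1 x) (hd2 x)
  have hdg' : Differentiable ℝ (deriv g) := by
    rw [hderg]; exact hd1'.sub hd2'
  have h2ne : ∀ x, h2 x ≠ 0 := fun x => (h2pos x).ne'
  have hgy : g y.1 = h1 y.1 - h2 y.1 := rfl
  -- formula for Efun
  have hEeq : Efun h1 h2 = fun x => deriv g x - g x * deriv h2 x / h2 x := by
    funext x
    unfold Efun
    rw [deriv_fun_div (hd1 x) (hd2 x) (h2ne x), hderg]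
    field_simp [h2ne x]
    ring
  have hdq : Differentiable ℝ (fun x => g x * deriv h2 x / h2 x) :=
    (hdg.mul hd2').div hd2 h2ne
  have hdE : Differentiable ℝ (Efun h1 h2) := by
    rw [hEeq]; exact hdg'.sub hdq
  have hEval : Efun h1 h2 y.1 = deriv g y.1 - g y.1 * deriv h2 y.1 / h2 y.1 := by
    rw [hEeq]
  have hderE : deriv (Efun h1 h2) y.1
      = deriv (deriv g) y.1 - deriv g y.1 * deriv h2 y.1 / h2 y.1
        - g y.1 * deriv (deriv h2) y.1 / h2 y.1
        + g y.1 * deriv h2 y.1 ^ 2 / h2 y.1 ^ 2 := by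
    rw [hEeq, deriv_fun_sub (hdg' y.1) (hdq y.1),
      deriv_fun_div (c := fun x => g x * deriv h2 x) ((hdg y.1).mul (hd2' y.1)) (hd2 y.1) (h2ne y.1),
      deriv_fun_mul (hdg y.1) (hd2' y.1)]
    field_simp [h2ne y.1]
    ring
  have hgpp : deriv (deriv h2) y.1 = deriv (deriv h1) y.1 - deriv (deriv g) y.1 := by
    have h : deriv (deriv g) y.1 = deriv (deriv h1) y.1 - deriv (deriv h2) y.1 := by
      rw [hderg]
      exact deriv_sub (hd1' y.1) (hd2' y.1)
    linarith
  -- pd computations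
  have hv1d : Differentiable ℝ v1 := hv1.differentiable one_ne_zero
  have hcurve1 : DifferentiableAt ℝ (fun t : ℝ => v1 (t, y.2)) y.1 :=
    DifferentiableAt.comp y.1 (hv1d (y.1, y.2))
      (differentiableAt_id.prodMk (differentiableAt_const _))
  have hcurve2 : DifferentiableAt ℝ (fun t : ℝ => v1 (y.1, t)) y.2 :=
    DifferentiableAt.comp y.2 (hv1d (y.1, y.2))
      ((differentiableAt_const _).prodMk differentiableAt_id)
  have hpd1E : pd1 (fun z => Efun h1 h2 z.1 * v1 z) y
      = deriv (Efun h1 h2) y.1 * v1 y + Efun h1 h2 y.1 * pd1 v1 y := by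
    unfold pd1
    show deriv (fun t : ℝ => Efun h1 h2 t * v1 (t, y.2)) y.1 = _
    rw [deriv_fun_mul (hdE y.1) hcurve1]
  have hpd2E : pd2 (fun z => z.2 * v1 z) y = v1 y + y.2 * pd2 v1 y := by
    unfold pd2
    show deriv (fun t : ℝ => t * v1 (y.1, t)) y.2 = _
    rw [deriv_fun_mul differentiableAt_fun_id hcurve2]
    simp [pd2]
  -- abbreviations and basic bounds
  set G : ℝ := |h1 y.1 - h2 y.1| with hGdef
  set Gp : ℝ := |deriv g y.1| with hGpdef
  set Gpp : ℝ := |deriv (deriv g) y.1| with hGppdef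
  set Hpp : ℝ := |deriv (deriv h1) y.1| with hHppdef
  set V : ℝ := Real.sqrt (v1 y ^ 2 + v2 y ^ 2) with hVdef
  set W : ℝ := Real.sqrt (pd1 v1 y ^ 2 + pd2 v1 y ^ 2 + pd1 v2 y ^ 2 + pd2 v2 y ^ 2)
    with hWdef
  have hG0 : 0 ≤ G := abs_nonneg _
  have hGp0 : 0 ≤ Gp := abs_nonneg _
  have hGpp0 : 0 ≤ Gpp := abs_nonneg _
  have hHpp0 : 0 ≤ Hpp := abs_nonneg _
  have hV0 : 0 ≤ V := Real.sqrt_nonneg _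
  have hW0 : 0 ≤ W := Real.sqrt_nonneg _
  have hv1V : |v1 y| ≤ V := abs_le_sqrt' (by nlinarith [sq_nonneg (v2 y)])
  have hp1W : |pd1 v1 y| ≤ W := abs_le_sqrt'
    (by nlinarith [sq_nonneg (pd2 v1 y), sq_nonneg (pd1 v2 y), sq_nonneg (pd2 v2 y)])
  have hp2W : |pd2 v1 y| ≤ W := abs_le_sqrt'
    (by nlinarith [sq_nonneg (pd1 v1 y), sq_nonneg (pd1 v2 y), sq_nonneg (pd2 v2 y)])
  have hGε : G ≤ α⁻¹ := by
    rw [hGdef, abs_le]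
    constructor
    · nlinarith [hl1 y.1, hu2 y.1]
    · nlinarith [hu1 y.1, hl2 y.1]
  -- division helpers
  have hdivb : ∀ a b M N : ℝ, |a| ≤ M → |b| ≤ N → |a * b / h2 y.1| ≤ M * N * α⁻¹ := by
    intro a b M N ha hb
    rw [abs_div, abs_mul, abs_of_pos (h2pos y.1), div_eq_mul_inv]
    have h1' : |a| * |b| ≤ M * N :=
      mul_le_mul ha hb (abs_nonneg _) ((abs_nonneg a).trans ha)
    have h2i : (h2 y.1)⁻¹ ≤ α⁻¹ := inv_anti₀ hα0 (hl2 y.1)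
    exact mul_le_mul h1' h2i (inv_nonneg.mpr (h2pos y.1).le)
      (mul_nonneg ((abs_nonneg a).trans ha) ((abs_nonneg b).trans hb))
  have hdivb2 : ∀ a b M N : ℝ, |a| ≤ M → |b| ≤ N →
      |a * b / h2 y.1 ^ 2| ≤ M * N * α⁻¹ ^ 2 := by
    intro a b M N ha hb
    rw [abs_div, abs_mul, abs_of_pos (pow_pos (h2pos y.1) 2), div_eq_mul_inv]
    have h1' : |a| * |b| ≤ M * N :=
      mul_le_mul ha hb (abs_nonneg _) ((abs_nonneg a).trans ha)
    have h2i : (h2 y.1 ^ 2)⁻¹ ≤ α⁻¹ ^ 2 := by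
      rw [← inv_pow]
      have : (h2 y.1)⁻¹ ≤ α⁻¹ := inv_anti₀ hα0 (hl2 y.1)
      exact pow_le_pow_left₀ (inv_nonneg.mpr (h2pos y.1).le) this 2
    exact mul_le_mul h1' h2i (inv_nonneg.mpr (by positivity))
      (mul_nonneg ((abs_nonneg a).trans ha) ((abs_nonneg b).trans hb))
  -- bound on E
  have hA0 : 0 ≤ G + Gp := add_nonneg hG0 hGp0
  have hB0 : 0 ≤ G * Hpp + Gpp := add_nonneg (mul_nonneg hG0 hHpp0) hGpp0
  have hεc2 : α⁻¹ ≤ c ^ 2 := le_trans hεc hcsq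
  have hE0b : |Efun h1 h2 y.1| ≤ c * (G + Gp) := by
    rw [hEval]
    have t1 : |g y.1 * deriv h2 y.1 / h2 y.1| ≤ G * K * α⁻¹ :=
      hdivb _ _ _ _ (le_of_eq (by rw [hgy])) (hK2 y.1)
    have tri : |deriv g y.1 - g y.1 * deriv h2 y.1 / h2 y.1|
        ≤ Gp + |g y.1 * deriv h2 y.1 / h2 y.1| := abs_sub _ _
    have m1 : Gp ≤ c * Gp := le_mul_of_one_le_left hGp0 hc1
    have m2 : G * K * α⁻¹ ≤ c * G := by
      calc G * K * α⁻¹ = (K * α⁻¹) * G := by ring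
        _ ≤ c * G := mul_le_mul_of_nonneg_right hKεc hG0
    linarith
  -- bound on deriv E
  have hE1b : |deriv (Efun h1 h2) y.1| ≤ 3 * c ^ 2 * ((G + Gp) + (G * Hpp + Gpp)) := by
    rw [hderE]
    have b1 : |deriv g y.1 * deriv h2 y.1 / h2 y.1| ≤ Gp * K * α⁻¹ :=
      hdivb _ _ _ _ le_rfl (hK2 y.1)
    have b2 : |g y.1 * deriv (deriv h2) y.1 / h2 y.1| ≤ G * (Hpp + Gpp) * α⁻¹ :=
      hdivb _ _ _ _ (le_of_eq (by rw [hgy])) (by rw [hgpp]; exact abs_sub _ _)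
    have b3 : |g y.1 * deriv h2 y.1 ^ 2 / h2 y.1 ^ 2| ≤ G * K ^ 2 * α⁻¹ ^ 2 := by
      refine hdivb2 _ _ _ _ (le_of_eq (by rw [hgy])) ?_
      rw [abs_pow]
      exact pow_le_pow_left₀ (abs_nonneg _) (hK2 y.1) 2
    have tri : |deriv (deriv g) y.1 - deriv g y.1 * deriv h2 y.1 / h2 y.1
        - g y.1 * deriv (deriv h2) y.1 / h2 y.1
        + g y.1 * deriv h2 y.1 ^ 2 / h2 y.1 ^ 2|
        ≤ Gpp + |deriv g y.1 * deriv h2 y.1 / h2 y.1|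
          + |g y.1 * deriv (deriv h2) y.1 / h2 y.1|
          + |g y.1 * deriv h2 y.1 ^ 2 / h2 y.1 ^ 2| := tri4 _ _ _ _
    have s1 : Gpp ≤ c ^ 2 * Gpp := le_mul_of_one_le_left hGpp0 hc2one
    have s2 : Gp * K * α⁻¹ ≤ c ^ 2 * Gp := by
      calc Gp * K * α⁻¹ = (K * α⁻¹) * Gp := by ring
        _ ≤ c ^ 2 * Gp := mul_le_mul_of_nonneg_right (le_trans hKεc hcsq) hGp0
    have s3 : G * (Hpp + Gpp) * α⁻¹ ≤ c ^ 2 * (G * Hpp) + c ^ 2 * Gpp := by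
      have s3a : G * Hpp * α⁻¹ ≤ c ^ 2 * (G * Hpp) := by
        calc G * Hpp * α⁻¹ = α⁻¹ * (G * Hpp) := by ring
          _ ≤ c ^ 2 * (G * Hpp) :=
            mul_le_mul_of_nonneg_right hεc2 (mul_nonneg hG0 hHpp0)
      have hGc : G * α⁻¹ ≤ c ^ 2 := by
        calc G * α⁻¹ ≤ α⁻¹ * α⁻¹ := mul_le_mul_of_nonneg_right hGε hε0.le
          _ ≤ c * c := mul_le_mul hεc hεc hε0.le hc0.le
          _ = c ^ 2 := by ring
      have s3b : G * Gpp * α⁻¹ ≤ c ^ 2 * Gpp := by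
        calc G * Gpp * α⁻¹ = (G * α⁻¹) * Gpp := by ring
          _ ≤ c ^ 2 * Gpp := mul_le_mul_of_nonneg_right hGc hGpp0
      calc G * (Hpp + Gpp) * α⁻¹ = G * Hpp * α⁻¹ + G * Gpp * α⁻¹ := by ring
        _ ≤ c ^ 2 * (G * Hpp) + c ^ 2 * Gpp := add_le_add s3a s3b
    have s5 : G * K ^ 2 * α⁻¹ ^ 2 ≤ c ^ 2 * G := by
      calc G * K ^ 2 * α⁻¹ ^ 2 = (K * α⁻¹) ^ 2 * G := by ring
        _ ≤ c ^ 2 * G :=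
          mul_le_mul_of_nonneg_right (pow_le_pow_left₀ (by positivity) hKεc 2) hG0
    have n1 : 0 ≤ c ^ 2 * G := mul_nonneg (sq_nonneg c) hG0
    have n2 : 0 ≤ c ^ 2 * Gp := mul_nonneg (sq_nonneg c) hGp0
    have n3 : 0 ≤ c ^ 2 * (G * Hpp) := mul_nonneg (sq_nonneg c) (mul_nonneg hG0 hHpp0)
    have n4 : 0 ≤ c ^ 2 * Gpp := mul_nonneg (sq_nonneg c) hGpp0
    linarith
  -- the four entries
  have hy2a : |y.2| ≤ 1 := by
    rw [abs_le]; exact ⟨by linarith [hy.1], hy.2⟩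
  have navv : 0 ≤ c ^ 2 * ((G + Gp) * V) :=
    mul_nonneg (sq_nonneg c) (mul_nonneg hA0 hV0)
  have naww : 0 ≤ c ^ 2 * ((G + Gp) * W) :=
    mul_nonneg (sq_nonneg c) (mul_nonneg hA0 hW0)
  have nbvv : 0 ≤ c ^ 2 * ((G * Hpp + Gpp) * V) :=
    mul_nonneg (sq_nonneg c) (mul_nonneg hB0 hV0)
  have navw : 0 ≤ c ^ 2 * ((G + Gp) * (V + W)) :=
    mul_nonneg (sq_nonneg c) (mul_nonneg hA0 (add_nonneg hV0 hW0))
  have u2 : G * W * α⁻¹ ≤ c ^ 2 * ((G + Gp) * W) := by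
    calc G * W * α⁻¹ = α⁻¹ * (G * W) := by ring
      _ ≤ c ^ 2 * (G * W) := mul_le_mul_of_nonneg_right hεc2 (mul_nonneg hG0 hW0)
      _ ≤ c ^ 2 * ((G + Gp) * W) := by
          apply mul_le_mul_of_nonneg_left _ (sq_nonneg c)
          exact mul_le_mul_of_nonneg_right (le_add_of_nonneg_right hGp0) hW0
  fin_cases i <;> fin_cases j <;>
    simp only [E2mat, Matrix.cons_val', Matrix.cons_val_zero, Matrix.cons_val_one,
      Matrix.head_cons, Matrix.empty_val', Matrix.cons_val_fin_one, Matrix.head_fin_const,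
      Matrix.of_apply, Fin.isValue, Fin.zero_eta, Fin.mk_one]
  · -- entry (0,0)
    have t1 : |v1 y * Efun h1 h2 y.1 / h2 y.1| ≤ V * (c * (G + Gp)) * α⁻¹ :=
      hdivb _ _ _ _ hv1V hE0b
    have t2 : |(h1 y.1 - h2 y.1) / h2 y.1 * pd1 v1 y| ≤ G * W * α⁻¹ := by
      rw [div_mul_eq_mul_div]
      exact hdivb _ _ _ _ le_rfl hp1W
    have tri := abs_add_le (v1 y * Efun h1 h2 y.1 / h2 y.1)
      ((h1 y.1 - h2 y.1) / h2 y.1 * pd1 v1 y)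
    have u1 : V * (c * (G + Gp)) * α⁻¹ ≤ c ^ 2 * ((G + Gp) * V) := by
      have h := mul_le_mul_of_nonneg_right
        (mul_le_mul_of_nonneg_left hεc hc0.le) (mul_nonneg hA0 hV0)
      calc V * (c * (G + Gp)) * α⁻¹ = c * α⁻¹ * ((G + Gp) * V) := by ring
        _ ≤ c * c * ((G + Gp) * V) := h
        _ = c ^ 2 * ((G + Gp) * V) := by ring
    linarith
  · -- entry (0,1)
    have t2 : |(h1 y.1 - h2 y.1) / h2 y.1 * pd2 v1 y| ≤ G * W * α⁻¹ := by
      rw [div_mul_eq_mul_div]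
      exact hdivb _ _ _ _ le_rfl hp2W
    linarith
  · -- entry (1,0)
    rw [hpd1E]
    have tri : |-y.2 * (deriv (Efun h1 h2) y.1 * v1 y + Efun h1 h2 y.1 * pd1 v1 y)|
        ≤ |deriv (Efun h1 h2) y.1| * |v1 y| + |Efun h1 h2 y.1| * |pd1 v1 y| := by
      rw [abs_mul, abs_neg]
      calc |y.2| * |deriv (Efun h1 h2) y.1 * v1 y + Efun h1 h2 y.1 * pd1 v1 y|
          ≤ 1 * |deriv (Efun h1 h2) y.1 * v1 y + Efun h1 h2 y.1 * pd1 v1 y| :=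
            mul_le_mul_of_nonneg_right hy2a (abs_nonneg _)
        _ = |deriv (Efun h1 h2) y.1 * v1 y + Efun h1 h2 y.1 * pd1 v1 y| := one_mul _
        _ ≤ |deriv (Efun h1 h2) y.1 * v1 y| + |Efun h1 h2 y.1 * pd1 v1 y| := abs_add_le _ _
        _ = |deriv (Efun h1 h2) y.1| * |v1 y| + |Efun h1 h2 y.1| * |pd1 v1 y| := by
            rw [abs_mul, abs_mul]
    have m1 : |deriv (Efun h1 h2) y.1| * |v1 y|
        ≤ (3 * c ^ 2 * ((G + Gp) + (G * Hpp + Gpp))) * V :=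
      mul_le_mul hE1b hv1V (abs_nonneg _) (by positivity)
    have m2 : |Efun h1 h2 y.1| * |pd1 v1 y| ≤ (c * (G + Gp)) * W :=
      mul_le_mul hE0b hp1W (abs_nonneg _) (by positivity)
    have u3 : (c * (G + Gp)) * W ≤ c ^ 2 * ((G + Gp) * W) := by
      calc (c * (G + Gp)) * W = c * ((G + Gp) * W) := by ring
        _ ≤ c ^ 2 * ((G + Gp) * W) :=
          mul_le_mul_of_nonneg_right hcsq (mul_nonneg hA0 hW0)
    linarith
  · -- entry (1,1)
    rw [hpd2E]
    have hs : |v1 y + y.2 * pd2 v1 y| ≤ V + W := by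
      calc |v1 y + y.2 * pd2 v1 y| ≤ |v1 y| + |y.2 * pd2 v1 y| := abs_add_le _ _
        _ ≤ V + W := by
            rw [abs_mul]
            have h := mul_le_mul hy2a hp2W (abs_nonneg _) zero_le_one
            rw [one_mul] at h
            linarith
    have tri : |-Efun h1 h2 y.1 * (v1 y + y.2 * pd2 v1 y)|
        ≤ (c * (G + Gp)) * (V + W) := by
      rw [abs_mul, abs_neg]
      exact mul_le_mul hE0b hs (abs_nonneg _) (by positivity)
    have u4 : (c * (G + Gp)) * (V + W) ≤ c ^ 2 * ((G + Gp) * (V + W)) := by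
      calc (c * (G + Gp)) * (V + W) = c * ((G + Gp) * (V + W)) := by ring
        _ ≤ c ^ 2 * ((G + Gp) * (V + W)) :=
          mul_le_mul_of_nonneg_right hcsq (mul_nonneg hA0 (add_nonneg hV0 hW0))
    linarith
end

section
/- Let α ∈ (0,1) and K > 0, and let h¹, h² be positive twice continuously differentiable real functions of y₁ satisfying α ≤ hⁱ(y₁) ≤ α⁻¹ and |∂_{y₁}hⁱ(y₁)| ≤ K for i = 1,2. Then there exists a constant C depending only on α and K such that for every point y = (y₁,y₂) with y₂ ∈ [0,1], every first-order partial derivative (with respect to y₁ or y₂) of each entry of the matrix R(y) is bounded in absolute value by C·( |h̄|·(1 + |∂²_{y₁}h¹|) + |∂_{y₁}h̄| + |∂²_{y₁}h̄| ) evaluated at y₁, where h̄ := h¹ − h². -/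
open Matrix

/-- The matrix `R(y) = [[h¹/h², 0],[−y₂h²∂_{y₁}(h¹/h²), 1]]` as a matrix-valued
function of `y`. -/
noncomputable def Rmat (h1 h2 : ℝ → ℝ) (y : ℝ × ℝ) : Matrix (Fin 2) (Fin 2) ℝ :=
  !![h1 y.1 / h2 y.1, 0;
     -y.2 * h2 y.1 * deriv (fun x => h1 x / h2 x) y.1, 1]

lemma abs_div_sq_le {α b x c : ℝ} (hα : 0 < α) (hb : α ≤ b) (hx : |x| ≤ c) :
    |x / b ^ 2| ≤ c * α⁻¹ ^ 2 := by
  have hb0 : 0 < b := lt_of_lt_of_le hα hb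
  have hc : 0 ≤ c := le_trans (abs_nonneg x) hx
  rw [abs_div, abs_pow, abs_of_pos hb0, div_le_iff₀ (by positivity)]
  have h1 : (1:ℝ) ≤ α⁻¹ ^ 2 * b ^ 2 := by
    have : α ^ 2 ≤ b ^ 2 := pow_le_pow_left₀ hα.le hb 2
    calc (1:ℝ) = α⁻¹ ^ 2 * α ^ 2 := by field_simp
    _ ≤ α⁻¹ ^ 2 * b ^ 2 := by gcongr
  have h2 := mul_le_mul_of_nonneg_left h1 hc
  rw [mul_one] at h2
  calc |x| ≤ c := hx
    _ ≤ c * (α⁻¹ ^ 2 * b ^ 2) := h2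
    _ = c * α⁻¹ ^ 2 * b ^ 2 := by ring

set_option maxHeartbeats 1600000 in
/-- every first-order partial derivative of every entry of `R`
is bounded by `C·(|h̄|(1+|∂²h¹|) + |∂h̄| + |∂²h̄|)`, with `C = C(α,K)` only. -/
theorem Rmat_entry_deriv_bound
    (α K : ℝ) (hα : α ∈ Set.Ioo (0:ℝ) 1) (hK : 0 < K) :
    ∃ C > 0, ∀ h1 h2 : ℝ → ℝ,
      (∀ x, 0 < h1 x) → (∀ x, 0 < h2 x) →
      ContDiff ℝ 2 h1 → ContDiff ℝ 2 h2 →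
      (∀ x, α ≤ h1 x) → (∀ x, h1 x ≤ α⁻¹) →
      (∀ x, α ≤ h2 x) → (∀ x, h2 x ≤ α⁻¹) →
      (∀ x, |deriv h1 x| ≤ K) → (∀ x, |deriv h2 x| ≤ K) →
      ∀ y : ℝ × ℝ, y.2 ∈ Set.Icc (0:ℝ) 1 →
      ∀ i j : Fin 2,
        |pd1 (fun z => Rmat h1 h2 z i j) y|
            ≤ C * (|h1 y.1 - h2 y.1| * (1 + |deriv (deriv h1) y.1|)
                   + |deriv (fun x => h1 x - h2 x) y.1|
                   + |deriv (deriv (fun x => h1 x - h2 x)) y.1|) ∧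
        |pd2 (fun z => Rmat h1 h2 z i j) y|
            ≤ C * (|h1 y.1 - h2 y.1| * (1 + |deriv (deriv h1) y.1|)
                   + |deriv (fun x => h1 x - h2 x) y.1|
                   + |deriv (deriv (fun x => h1 x - h2 x)) y.1|) := by
  obtain ⟨hα0, hα1⟩ := hα
  set B : ℝ := α⁻¹ with hBdef
  have hB1 : (1:ℝ) ≤ B := (one_le_inv_iff₀).2 ⟨hα0, le_of_lt hα1⟩
  set M : ℝ := B + K + 1 with hMdef
  have hM1 : (1:ℝ) ≤ M := by rw [hMdef]; linarith
  have hM0 : (0:ℝ) ≤ M := by linarith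
  have hBM : B ≤ M := by rw [hMdef]; linarith
  have hKM : K ≤ M := by rw [hMdef]; linarith
  refine ⟨M ^ 4, by positivity, ?_⟩
  intro h1 h2 h1pos h2pos hc1 hc2 hl1 hu1 hl2 hu2 hd1K hd2K y hy i j
  have Dh1 : Differentiable ℝ h1 := hc1.differentiable (by norm_num)
  have Dh2 : Differentiable ℝ h2 := hc2.differentiable (by norm_num)
  have hc1' : ContDiff ℝ (1+1) h1 := by norm_num; exact hc1
  have hc2' : ContDiff ℝ (1+1) h2 := by norm_num; exact hc2
  have Dd1 : Differentiable ℝ (deriv h1) :=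
    ((contDiff_succ_iff_deriv.mp hc1').2.2).differentiable (by norm_num)
  have Dd2 : Differentiable ℝ (deriv h2) :=
    ((contDiff_succ_iff_deriv.mp hc2').2.2).differentiable (by norm_num)
  have h2ne : ∀ t, h2 t ≠ 0 := fun t => ne_of_gt (h2pos t)
  have derivf : ∀ t, deriv (fun x => h1 x / h2 x) t
      = (deriv h1 t * h2 t - h1 t * deriv h2 t) / h2 t ^ 2 :=
    fun t => deriv_div (Dh1 t) (Dh2 t) (h2ne t)
  set x := y.1 with hxdef
  set a := h1 x with hadef
  set b := h2 x with hbdef2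
  set a' := deriv h1 x with ha'def
  set b' := deriv h2 x with hb'def
  set a'' := deriv (deriv h1) x with ha''def
  set b'' := deriv (deriv h2) x with hb''def
  have hbar1 : deriv (fun x => h1 x - h2 x) = fun t => deriv h1 t - deriv h2 t :=
    funext fun t => deriv_sub (Dh1 t) (Dh2 t)
  have hbar2 : deriv (fun t => deriv h1 t - deriv h2 t) x = a'' - b'' :=
    deriv_sub (Dd1 x) (Dd2 x)
  set u := |a - b| with hu
  set v := |a' - b'| with hv
  set w := |a'' - b''| with hw
  set p := |a''| with hp
  set E := u * (1 + p) + v + w with hEdef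
  rw [hbar1]
  simp only
  rw [hbar2, ← hv, ← hw]
  have hu0 : 0 ≤ u := abs_nonneg _
  have hv0 : 0 ≤ v := abs_nonneg _
  have hw0 : 0 ≤ w := abs_nonneg _
  have hp0 : 0 ≤ p := abs_nonneg _
  have hE0 : 0 ≤ E := by rw [hEdef]; positivity
  have hbα : α ≤ b := hl2 x
  have hbB : b ≤ B := hu2 x
  have haB : |a| ≤ B := abs_le.mpr ⟨by linarith [hl1 x], hu1 x⟩
  have hbabs : |b| ≤ B := abs_le.mpr ⟨by linarith, hbB⟩
  have ha'K : |a'| ≤ K := hd1K x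
  have hb'K : |b'| ≤ K := hd2K x
  -- numerator bounds
  have hN : |a' * b - a * b'| ≤ B * v + K * u := by
    have id1 : a' * b - a * b' = (a' - b') * b + b' * (b - a) := by ring
    rw [id1]
    calc |(a' - b') * b + b' * (b - a)| ≤ |(a' - b') * b| + |b' * (b - a)| := abs_add_le _ _
      _ = v * |b| + |b'| * u := by rw [abs_mul, abs_mul, abs_sub_comm b a]
      _ ≤ B * v + K * u := by
          have t1 : v * |b| ≤ v * B := mul_le_mul_of_nonneg_left hbabs hv0
          have t2 : |b'| * u ≤ K * u := mul_le_mul_of_nonneg_right hb'K hu0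
          linarith
  have hN' : |a'' * b - a * b''| ≤ p * u + B * w := by
    have id2 : a'' * b - a * b'' = a'' * (b - a) + a * (a'' - b'') := by ring
    rw [id2]
    calc |a'' * (b - a) + a * (a'' - b'')| ≤ |a'' * (b - a)| + |a * (a'' - b'')| := abs_add_le _ _
      _ = p * u + |a| * w := by rw [abs_mul, abs_mul, abs_sub_comm b a]
      _ ≤ p * u + B * w := by linarith [mul_le_mul_of_nonneg_right haB hw0]
  have hy2 : |y.2| ≤ 1 := abs_le.mpr ⟨by linarith [hy.1], hy.2⟩
  -- power bounds
  have hB2 : B ^ 2 ≤ M ^ 2 := pow_le_pow_left₀ (by positivity) hBM 2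
  have hB3 : B ^ 3 ≤ M ^ 3 := pow_le_pow_left₀ (by positivity) hBM 3
  have hB4 : B ^ 4 ≤ M ^ 4 := pow_le_pow_left₀ (by positivity) hBM 4
  have hM34 : M ^ 3 ≤ M ^ 4 := pow_le_pow_right₀ hM1 (by norm_num)
  have hB3M4 : B ^ 3 ≤ M ^ 4 := le_trans hB3 hM34
  have hB2K : B ^ 2 * K ≤ M ^ 3 := by
    calc B ^ 2 * K ≤ M ^ 2 * M := mul_le_mul hB2 hKM hK.le (by positivity)
      _ = M ^ 3 := by ring
  have hB3K : B ^ 3 * K ≤ M ^ 4 := by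
    calc B ^ 3 * K ≤ M ^ 3 * M := mul_le_mul hB3 hKM hK.le (by positivity)
      _ = M ^ 4 := by ring
  have hB2K2 : B ^ 2 * K ^ 2 ≤ M ^ 4 := by
    calc B ^ 2 * K ^ 2 ≤ M ^ 2 * M ^ 2 :=
          mul_le_mul hB2 (pow_le_pow_left₀ hK.le hKM 2) (by positivity) (by positivity)
      _ = M ^ 4 := by ring
  -- bound on deriv (h1/h2)
  have goal1 : |deriv (fun x' => h1 x' / h2 x') x| ≤ M ^ 3 * E := by
    rw [derivf x]
    calc |(a' * b - a * b') / b ^ 2| ≤ (B * v + K * u) * B ^ 2 := abs_div_sq_le hα0 hbα hN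
      _ = v * B ^ 3 + u * (B ^ 2 * K) := by ring
      _ ≤ M ^ 3 * E := by
          have t1 : v * B ^ 3 ≤ v * M ^ 3 := mul_le_mul_of_nonneg_left hB3 hv0
          have t2 : u * (B ^ 2 * K) ≤ u * M ^ 3 := mul_le_mul_of_nonneg_left hB2K hu0
          have t3 : 0 ≤ M ^ 3 * (u * p) := by positivity
          have t4 : 0 ≤ M ^ 3 * w := by positivity
          have e2 : M ^ 3 * E = M ^ 3 * u + M ^ 3 * (u * p) + M ^ 3 * v + M ^ 3 * w := by
            rw [hEdef]; ring
          rw [e2]; linarith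
  have goal1' : |deriv (fun x' => h1 x' / h2 x') x| ≤ M ^ 4 * E :=
    le_trans goal1 (mul_le_mul_of_nonneg_right hM34 hE0)
  -- differentiability of deriv (h1/h2)
  have DN : Differentiable ℝ (fun t => deriv h1 t * h2 t - h1 t * deriv h2 t) :=
    (Dd1.mul Dh2).sub (Dh1.mul Dd2)
  have Ddf : Differentiable ℝ (deriv (fun x' => h1 x' / h2 x')) := by
    rw [funext derivf]
    exact DN.div (Dh2.pow 2) (fun t => pow_ne_zero 2 (h2ne t))
  -- G = h2 * deriv(h1/h2) and its derivative
  have hGeq : (fun t => h2 t * deriv (fun x' => h1 x' / h2 x') t)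
      = fun t => (deriv h1 t * h2 t - h1 t * deriv h2 t) / h2 t := by
    funext t
    rw [derivf t, eq_div_iff (h2ne t)]
    field_simp
    rw [mul_div_cancel_left₀ _ (h2ne t)]
  have derivG : deriv (fun t => h2 t * deriv (fun x' => h1 x' / h2 x') t) x
      = ((a'' * b + a' * b' - (a' * b' + a * b'')) * b - (a' * b - a * b') * b') / b ^ 2 := by
    rw [hGeq, deriv_fun_div (DN x) (Dh2 x) (h2ne x)]
    congr 2
    rw [deriv_fun_sub (f := fun t => deriv h1 t * h2 t) (g := fun t => h1 t * deriv h2 t) ((Dd1 x).mul (Dh2 x)) ((Dh1 x).mul (Dd2 x)),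
        deriv_fun_mul (Dd1 x) (Dh2 x), deriv_fun_mul (Dh1 x) (Dd2 x)]
  have goal2 : |deriv (fun t => h2 t * deriv (fun x' => h1 x' / h2 x') t) x| ≤ M ^ 4 * E := by
    rw [derivG]
    have hNum : |(a'' * b + a' * b' - (a' * b' + a * b'')) * b - (a' * b - a * b') * b'|
        ≤ (p * u + B * w) * B + (B * v + K * u) * K := by
      have hPuBw : 0 ≤ p * u + B * w := le_trans (abs_nonneg _) hN'
      have hBvKu : 0 ≤ B * v + K * u := le_trans (abs_nonneg _) hN
      calc |(a'' * b + a' * b' - (a' * b' + a * b'')) * b - (a' * b - a * b') * b'|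
          = |(a'' * b - a * b'') * b + (a' * b - a * b') * (-b')| := by ring_nf
        _ ≤ |(a'' * b - a * b'') * b| + |(a' * b - a * b') * (-b')| := abs_add_le _ _
        _ = |a'' * b - a * b''| * |b| + |a' * b - a * b'| * |b'| := by
            rw [abs_mul, abs_mul, abs_neg]
        _ ≤ (p * u + B * w) * B + (B * v + K * u) * K :=
            add_le_add (mul_le_mul hN' hbabs (abs_nonneg _) hPuBw)
              (mul_le_mul hN hb'K (abs_nonneg _) hBvKu)
    calc |((a'' * b + a' * b' - (a' * b' + a * b'')) * b - (a' * b - a * b') * b') / b ^ 2|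
        ≤ ((p * u + B * w) * B + (B * v + K * u) * K) * B ^ 2 := abs_div_sq_le hα0 hbα hNum
      _ = p * u * B ^ 3 + w * B ^ 4 + v * (B ^ 3 * K) + u * (B ^ 2 * K ^ 2) := by ring
      _ ≤ M ^ 4 * E := by
          have t1 : p * u * B ^ 3 ≤ p * u * M ^ 4 :=
            mul_le_mul_of_nonneg_left hB3M4 (mul_nonneg hp0 hu0)
          have t2 : w * B ^ 4 ≤ w * M ^ 4 := mul_le_mul_of_nonneg_left hB4 hw0
          have t3 : v * (B ^ 3 * K) ≤ v * M ^ 4 := mul_le_mul_of_nonneg_left hB3K hv0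
          have t4 : u * (B ^ 2 * K ^ 2) ≤ u * M ^ 4 := mul_le_mul_of_nonneg_left hB2K2 hu0
          have e2 : M ^ 4 * E = M ^ 4 * u + p * u * M ^ 4 + v * M ^ 4 + w * M ^ 4 := by
            rw [hEdef]; ring
          have t5 : 0 ≤ M ^ 4 * u := by positivity
          rw [e2]; linarith
  have hE0' : 0 ≤ M ^ 4 * E := by positivity
  fin_cases i <;> fin_cases j <;>
    simp only [Fin.zero_eta, Fin.mk_one]
  · constructor
    · have e : (fun t => Rmat h1 h2 (t, y.2) 0 0) = fun t => h1 t / h2 t := by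
        funext t; simp [Rmat]
      rw [pd1, e]
      exact goal1'
    · have e : (fun t => Rmat h1 h2 (y.1, t) 0 0) = fun _ => h1 x / h2 x := by
        funext t; simp [Rmat]; rfl
      rw [pd2, e, deriv_const]
      simpa using hE0'
  · constructor
    · have e : (fun t => Rmat h1 h2 (t, y.2) 0 1) = fun _ => (0:ℝ) := by
        funext t; simp [Rmat]
      rw [pd1, e, deriv_const]
      simpa using hE0'
    · have e : (fun t => Rmat h1 h2 (y.1, t) 0 1) = fun _ => (0:ℝ) := by
        funext t; simp [Rmat]
      rw [pd2, e, deriv_const]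
      simpa using hE0'
  · constructor
    · have e : (fun t => Rmat h1 h2 (t, y.2) 1 0)
          = fun t => -y.2 * (h2 t * deriv (fun x' => h1 x' / h2 x') t) := by
        funext t; simp [Rmat]; ring
      rw [pd1, e, deriv_const_mul (d := fun t => h2 t * deriv (fun x' => h1 x' / h2 x') t) _ ((Dh2 x).mul (Ddf x))]
      rw [abs_mul, abs_neg]
      calc |y.2| * |deriv (fun t => h2 t * deriv (fun x' => h1 x' / h2 x') t) x|
          ≤ 1 * (M ^ 4 * E) := mul_le_mul hy2 goal2 (abs_nonneg _) zero_le_one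
        _ = M ^ 4 * E := one_mul _
    · have e : (fun t => Rmat h1 h2 (y.1, t) 1 0)
          = fun t => t * (-(h2 x * deriv (fun x' => h1 x' / h2 x') x)) := by
        funext t; simp [Rmat]; ring
      rw [pd2, e, deriv_mul_const (c := fun t : ℝ => t) differentiableAt_id, deriv_id'', one_mul]
      rw [abs_neg, abs_mul]
      calc |h2 x| * |deriv (fun x' => h1 x' / h2 x') x|
          ≤ B * (M ^ 3 * E) := mul_le_mul hbabs goal1 (abs_nonneg _) (by positivity)
        _ ≤ M * (M ^ 3 * E) := mul_le_mul_of_nonneg_right hBM (by positivity)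
        _ = M ^ 4 * E := by ring
  · constructor
    · have e : (fun t => Rmat h1 h2 (t, y.2) 1 1) = fun _ => (1:ℝ) := by
        funext t; simp [Rmat]
      rw [pd1, e, deriv_const]
      simpa using hE0'
    · have e : (fun t => Rmat h1 h2 (y.1, t) 1 1) = fun _ => (1:ℝ) := by
        funext t; simp [Rmat]
      rw [pd2, e, deriv_const]
      simpa using hE0'
end
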